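/- arXiv:2304.02141 — 6 statements merged into one kernel-verified Lean document; each statement's English description precedes it below -/
import Mathlib

section
/- Let N ≥ 1, let z_1,…,z_N be real numbers, and let Q_0 ≤ Q_1 be reals. If z_{n'} < 0 for some index n', then there exist a feasible unimodal sequence q that minimizes the linear loss L(q) = ∑_{n=1}^N z_n q_n over all feasible unimodal sequences, and an index n* with z_{n*} < 0 and q_{n*} = Q_1. -/
/-- `q` is feasible: each coordinate with index in `{1,…,N}` lies in `[Q0, Q1]`. -/
def Feasible (Q0 Q1 : ℝ) (N : ℕ) (q : ℕ → ℝ) : Prop :=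
  ∀ n, 1 ≤ n → n ≤ N → Q0 ≤ q n ∧ q n ≤ Q1

/-- `q` is nondecreasing on indices `{a,…,b}`. -/
def NondecOn (q : ℕ → ℝ) (a b : ℕ) : Prop :=
  ∀ i j, a ≤ i → i ≤ j → j ≤ b → q i ≤ q j

/-- `q` is nonincreasing on indices `{a,…,b}`. -/
def NonincOn (q : ℕ → ℝ) (a b : ℕ) : Prop :=
  ∀ i j, a ≤ i → i ≤ j → j ≤ b → q j ≤ q i

/-- `q` is unimodal on `{1,…,N}`. -/
def UnimodalOn (N : ℕ) (q : ℕ → ℝ) : Prop :=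
  ∃ p, 1 ≤ p ∧ p ≤ N ∧ NondecOn q 1 p ∧ NonincOn q p N

/-- Linear loss `∑_{n=1}^N z_n q_n`. -/
noncomputable def linLoss (z q : ℕ → ℝ) (N : ℕ) : ℝ :=
  ∑ n ∈ Finset.Icc 1 N, z n * q n

open Finset in
theorem sum_Icc_bot (a b : ℕ) (h : a ≤ b) (f : ℕ → ℝ) :
    ∑ n ∈ Icc a b, f n = f a + ∑ n ∈ Icc (a+1) b, f n := by
  rw [show Icc a b = insert a (Icc (a+1) b) by ext x; simp; omega, Finset.sum_insert (by simp)]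

open Finset in
theorem key (z : ℕ → ℝ) (N : ℕ) (m : ℝ) (hm : m ≤ 0)
    (hint : ∀ a b, 1 ≤ a → a ≤ b → b ≤ N → m ≤ ∑ n ∈ Icc a b, z n) :
    ∀ k a b, b - a ≤ k → 1 ≤ a → a ≤ b → b ≤ N → ∀ c, 0 ≤ c → ∀ t : ℕ → ℝ,
      (∀ n, a ≤ n → n ≤ b → 0 ≤ t n ∧ t n ≤ c) →
      (∃ p, a ≤ p ∧ p ≤ b ∧ NondecOn t a p ∧ NonincOn t p b) →
      c * m ≤ ∑ n ∈ Icc a b, z n * t n := by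
  intro k
  induction k with
  | zero =>
    intro a b hk ha hab hb c hc t ht _
    have : a = b := by omega
    subst this
    rw [Finset.Icc_self, Finset.sum_singleton]
    rcases le_or_gt 0 (z a) with hz | hz
    · have h1 : 0 ≤ z a * t a := mul_nonneg hz (ht a le_rfl le_rfl).1
      nlinarith [mul_nonpos_of_nonneg_of_nonpos hc hm]
    · have h1 : m ≤ z a := by have := hint a a ha le_rfl hb; simpa using this
      nlinarith [(ht a le_rfl le_rfl).2]
  | succ k ih =>
    intro a b hk ha hab hb c hc t ht hp
    obtain ⟨p, hap, hpb, hdec, hinc⟩ := hp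
    by_cases hab' : a = b
    · subst hab'
      rw [Finset.Icc_self, Finset.sum_singleton]
      rcases le_or_gt 0 (z a) with hz | hz
      · have h1 : 0 ≤ z a * t a := mul_nonneg hz (ht a le_rfl le_rfl).1
        nlinarith [mul_nonpos_of_nonneg_of_nonpos hc hm]
      · have h1 : m ≤ z a := by have := hint a a ha le_rfl hb; simpa using this
        nlinarith [(ht a le_rfl le_rfl).2]
    · have hab2 : a < b := lt_of_le_of_ne hab hab'
      have hS : m ≤ ∑ n ∈ Icc a b, z n := hint a b ha hab hb
      by_cases hcase : t b ≤ t a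
      · -- remove top endpoint b
        obtain ⟨b', rfl⟩ : ∃ b', b = b'+1 := ⟨b-1, by omega⟩
        have hmin : ∀ n, a ≤ n → n ≤ b'+1 → t (b'+1) ≤ t n := by
          intro n h1 h2
          rcases le_or_gt n p with h | h
          · exact le_trans hcase (hdec a n le_rfl h1 h)
          · exact hinc n (b'+1) h.le h2 le_rfl
        have htb0 : 0 ≤ t (b'+1) := (ht _ (by omega) le_rfl).1
        have htbc : t (b'+1) ≤ c := (ht _ (by omega) le_rfl).2
        have hIH : (c - t (b'+1)) * m ≤ ∑ n ∈ Icc a b', z n * (t n - t (b'+1)) := by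
          apply ih a b' (by omega) ha (by omega) (by omega) _ (by linarith)
          · intro n h1 h2
            exact ⟨by linarith [hmin n h1 (by omega)], by linarith [(ht n h1 (by omega)).2]⟩
          · refine ⟨min p b', le_min hap (by omega), min_le_right _ _, ?_, ?_⟩
            · intro i j h1 h2 h3
              have h4 := hdec i j h1 h2 (le_trans h3 (min_le_left _ _))
              show t i - t (b'+1) ≤ t j - t (b'+1)
              linarith
            · intro i j h1 h2 h3
              show t j - t (b'+1) ≤ t i - t (b'+1)
              rcases le_or_gt p b' with h | h
              · have h4 := hinc i j (by omega : p ≤ i) h2 (by omega)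
                linarith
              · have hij : i = j := by
                  have := min_eq_right h.le ▸ h1
                  omega
                subst hij; exact le_rfl
        have e1 : ∑ n ∈ Icc a (b'+1), z n * t n
            = (∑ n ∈ Icc a b', z n * (t n - t (b'+1))) + t (b'+1) * ∑ n ∈ Icc a (b'+1), z n := by
          have e0 : ∀ n ∈ Icc a (b'+1), z n * t n = z n * (t n - t (b'+1)) + t (b'+1) * z n := by
            intro n _; ring
          rw [Finset.sum_congr rfl e0, Finset.sum_add_distrib, ← Finset.mul_sum,
              Finset.sum_Icc_succ_top (by omega : a ≤ b'+1) (fun n => z n * (t n - t (b'+1)))]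
          simp
        rw [e1]
        have : t (b'+1) * m ≤ t (b'+1) * ∑ n ∈ Icc a (b'+1), z n :=
          mul_le_mul_of_nonneg_left hS htb0
        nlinarith
      · -- remove bottom endpoint a
        push_neg at hcase
        have hmin : ∀ n, a ≤ n → n ≤ b → t a ≤ t n := by
          intro n h1 h2
          rcases le_or_gt n p with h | h
          · exact hdec a n le_rfl h1 h
          · exact le_trans hcase.le (hinc n b h.le h2 le_rfl)
        have hta0 : 0 ≤ t a := (ht _ le_rfl (by omega)).1
        have htac : t a ≤ c := (ht _ le_rfl (by omega)).2
        have hIH : (c - t a) * m ≤ ∑ n ∈ Icc (a+1) b, z n * (t n - t a) := by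
          apply ih (a+1) b (by omega) (by omega) (by omega) hb _ (by linarith)
          · intro n h1 h2
            exact ⟨by linarith [hmin n (by omega) h2], by linarith [(ht n (by omega) h2).2]⟩
          · refine ⟨max p (a+1), le_max_right _ _, max_le hpb (by omega), ?_, ?_⟩
            · intro i j h1 h2 h3
              show t i - t a ≤ t j - t a
              rcases le_or_gt (a+1) p with h | h
              · have h4 := hdec i j (by omega) h2 (by rw [max_eq_left h] at h3; exact h3)
                linarith
              · have hij : i = j := by
                  have := max_eq_right (by omega : p ≤ a+1) ▸ h3
                  omega
                subst hij; exact le_rfl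
            · intro i j h1 h2 h3
              have h4 := hinc i j (le_trans (le_max_left _ _) h1) h2 h3
              show t j - t a ≤ t i - t a
              linarith
        have e1 : ∑ n ∈ Icc a b, z n * t n
            = (∑ n ∈ Icc (a+1) b, z n * (t n - t a)) + t a * ∑ n ∈ Icc a b, z n := by
          have e0 : ∀ n ∈ Icc a b, z n * t n = z n * (t n - t a) + t a * z n := by
            intro n _; ring
          rw [Finset.sum_congr rfl e0, Finset.sum_add_distrib, ← Finset.mul_sum,
              sum_Icc_bot a b (by omega) (fun n => z n * (t n - t a))]
          simp
        rw [e1]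
        have : t a * m ≤ t a * ∑ n ∈ Icc a b, z n :=
          mul_le_mul_of_nonneg_left hS hta0
        nlinarith

open Finset

/-- if some loss `z_{n'}` is negative, then there is a feasible unimodal
minimizer `q` of the linear loss and an index `n*` with `z_{n*} < 0` and `q_{n*} = Q1`. -/
theorem stmt1 (N : ℕ) (hN : 1 ≤ N) (z : ℕ → ℝ) (Q0 Q1 : ℝ) (hQ : Q0 ≤ Q1)
    (hz : ∃ n', 1 ≤ n' ∧ n' ≤ N ∧ z n' < 0) :
    ∃ q : ℕ → ℝ, Feasible Q0 Q1 N q ∧ UnimodalOn N q ∧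
      (∀ q' : ℕ → ℝ, Feasible Q0 Q1 N q' → UnimodalOn N q' →
        linLoss z q N ≤ linLoss z q' N) ∧
      ∃ nstar, 1 ≤ nstar ∧ nstar ≤ N ∧ z nstar < 0 ∧ q nstar = Q1 := by
  obtain ⟨n', hn1, hn2, hzn⟩ := hz
  -- the finite set of interval sums
  set P : Finset (ℕ × ℕ) := (Finset.Icc 1 N ×ˢ Finset.Icc 1 N).filter (fun p => p.1 ≤ p.2) with hP
  set F : ℕ × ℕ → ℝ := fun p => ∑ n ∈ Icc p.1 p.2, z n with hF
  have hmemP : ∀ a b : ℕ, 1 ≤ a → a ≤ b → b ≤ N → (a, b) ∈ P := by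
    intro a b h1 h2 h3
    simp [hP, Finset.mem_filter, Finset.mem_product, Finset.mem_Icc]
    omega
  have hne : (P.image F).Nonempty := ⟨F (n', n'), Finset.mem_image_of_mem F (hmemP n' n' hn1 le_rfl hn2)⟩
  set m : ℝ := (P.image F).min' hne with hmdef
  have hint : ∀ a b, 1 ≤ a → a ≤ b → b ≤ N → m ≤ ∑ n ∈ Icc a b, z n := by
    intro a b h1 h2 h3
    exact Finset.min'_le _ _ (Finset.mem_image_of_mem F (hmemP a b h1 h2 h3))
  have hmneg : m < 0 := by
    have := hint n' n' hn1 le_rfl hn2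
    simp at this
    linarith
  -- extract the minimizing interval
  obtain ⟨⟨a, b⟩, hmem, hFab⟩ := Finset.mem_image.mp ((P.image F).min'_mem hne)
  simp only [hP, Finset.mem_filter, Finset.mem_product, Finset.mem_Icc] at hmem
  obtain ⟨⟨⟨ha1, haN⟩, ⟨hb1, hbN⟩⟩, hab⟩ := hmem
  have hFab' : ∑ n ∈ Icc a b, z n = m := hFab
  -- the candidate minimizer
  set q : ℕ → ℝ := fun n => if a ≤ n ∧ n ≤ b then Q1 else Q0 with hq
  have hfeas : Feasible Q0 Q1 N q := by
    intro n _ _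
    simp only [hq]
    split_ifs <;> constructor <;> linarith
  have huni : UnimodalOn N q := by
    refine ⟨a, ha1, haN, ?_, ?_⟩
    · intro i j h1 h2 h3
      simp only [hq]
      split_ifs with hi hj <;> try linarith
      · exfalso; omega
    · intro i j h1 h2 h3
      simp only [hq]
      split_ifs with hj hi <;> try linarith
      · exfalso; omega
  -- value of linLoss at q
  have hSval : linLoss z q N = Q0 * (∑ n ∈ Icc 1 N, z n) + (Q1 - Q0) * m := by
    unfold linLoss
    have e0 : ∀ n ∈ Icc 1 N, z n * q n
        = z n * Q0 + (if n ∈ Icc a b then (Q1 - Q0) * z n else 0) := by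
      intro n _
      simp only [hq, Finset.mem_Icc]
      split_ifs <;> ring
    rw [Finset.sum_congr rfl e0, Finset.sum_add_distrib]
    congr 1
    · rw [← Finset.sum_mul]; ring
    · rw [Finset.sum_ite_mem, Finset.inter_eq_right.mpr (Finset.Icc_subset_Icc ha1 hbN),
        ← Finset.mul_sum, hFab']
  refine ⟨q, hfeas, huni, ?_, ?_⟩
  · -- minimality
    intro q' hfeas' huni'
    obtain ⟨p, hp1, hpN, hdec, hinc⟩ := huni'
    have hkey := key z N m (le_of_lt hmneg) hint N 1 N (by omega) le_rfl hN le_rfl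
      (Q1 - Q0) (by linarith) (fun n => q' n - Q0)
      (by intro n h1 h2; have := hfeas' n h1 h2; constructor <;> simp <;> linarith)
      ⟨p, hp1, hpN, by intro i j h1 h2 h3; have := hdec i j h1 h2 h3; simp; linarith,
        by intro i j h1 h2 h3; have := hinc i j h1 h2 h3; simp; linarith⟩
    have e1 : linLoss z q' N
        = Q0 * (∑ n ∈ Icc 1 N, z n) + ∑ n ∈ Icc 1 N, z n * (q' n - Q0) := by
      unfold linLoss
      rw [Finset.mul_sum, ← Finset.sum_add_distrib]
      apply Finset.sum_congr rfl
      intro n _; ring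
    rw [hSval, e1]
    linarith
  · -- the index with negative loss covered by Q1
    have : ∃ n ∈ Icc a b, z n < 0 := by
      by_contra h
      push_neg at h
      have : (0:ℝ) ≤ ∑ n ∈ Icc a b, z n := Finset.sum_nonneg h
      rw [hFab'] at this
      linarith
    obtain ⟨nstar, hns, hzns⟩ := this
    simp only [Finset.mem_Icc] at hns
    refine ⟨nstar, by omega, by omega, hzns, ?_⟩
    simp only [hq]
    rw [if_pos ⟨hns.1, hns.2⟩]
end

section
/- Let N ≥ 1, let z_1,…,z_N be real numbers, let Q_0 ≤ Q_1 be reals, and let q be a feasible unimodal sequence with peak index p (q nondecreasing on {1,…,p}, nonincreasing on {p,…,N}). Fix an index n with 1 < n < p. If z_n < 0, then the sequence q' obtained from q by setting q'_n = q_{n+1} (and q'_j = q_j for j ≠ n) is feasible, unimodal with the same peak p, and satisfies ∑_j z_j q'_j ≤ ∑_j z_j q_j. Likewise, if z_n > 0, then the sequence q'' obtained by setting q''_n = q_{n-1} is feasible, unimodal with peak p, and satisfies ∑_j z_j q''_j ≤ ∑_j z_j q_j. -/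
/-- for a feasible sequence, unimodal with peak `p`, and an index `n` with
`1 < n < p`: if `z_n < 0`, replacing `q_n` by `q_{n+1}` keeps feasibility and unimodality
with the same peak and does not increase the linear loss; if `z_n > 0`, the same holds
for replacing `q_n` by `q_{n-1}`. -/
theorem stmt2 (N p n : ℕ) (z q : ℕ → ℝ) (Q0 Q1 : ℝ) (hQ : Q0 ≤ Q1)
    (hN : 1 ≤ N) (hpN : p ≤ N)
    (hfeas : Feasible Q0 Q1 N q)
    (hup : NondecOn q 1 p) (hdown : NonincOn q p N)
    (h1n : 1 < n) (hnp : n < p) :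
    (z n < 0 →
      Feasible Q0 Q1 N (Function.update q n (q (n + 1))) ∧
      NondecOn (Function.update q n (q (n + 1))) 1 p ∧
      NonincOn (Function.update q n (q (n + 1))) p N ∧
      linLoss z (Function.update q n (q (n + 1))) N ≤ linLoss z q N) ∧
    (0 < z n →
      Feasible Q0 Q1 N (Function.update q n (q (n - 1))) ∧
      NondecOn (Function.update q n (q (n - 1))) 1 p ∧
      NonincOn (Function.update q n (q (n - 1))) p N ∧
      linLoss z (Function.update q n (q (n - 1))) N ≤ linLoss z q N) := by
  have hnN : n ≤ N := le_trans (le_of_lt hnp) hpN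
  have hnmem : n ∈ Finset.Icc 1 N := Finset.mem_Icc.2 ⟨le_of_lt h1n, hnN⟩
  have loss_update : ∀ v : ℝ, z n * v ≤ z n * q n →
      linLoss z (Function.update q n v) N ≤ linLoss z q N := by
    intro v hv
    unfold linLoss
    rw [← Finset.add_sum_erase _ (fun m => z m * Function.update q n v m) hnmem,
        ← Finset.add_sum_erase _ (fun m => z m * q m) hnmem]
    apply add_le_add
    · simpa using hv
    · apply le_of_eq
      apply Finset.sum_congr rfl
      intro x hx
      rw [Function.update_of_ne (Finset.ne_of_mem_erase hx)]
  have hq1 : q n ≤ q (n + 1) := hup n (n + 1) (le_of_lt h1n) (Nat.le_succ n) hnp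
  have hq2 : q (n - 1) ≤ q n := hup (n - 1) n (Nat.le_sub_one_of_lt h1n)
    (Nat.sub_le n 1) (le_of_lt hnp)
  have feas : ∀ v : ℝ, Q0 ≤ v → v ≤ Q1 → Feasible Q0 Q1 N (Function.update q n v) := by
    intro v h0 h1 m hm1 hmN
    by_cases hmn : m = n
    · subst hmn; simp [h0, h1]
    · rw [Function.update_of_ne hmn]; exact hfeas m hm1 hmN
  have noninc : ∀ v : ℝ, NonincOn (Function.update q n v) p N := by
    intro v i j hpi hij hjN
    rw [Function.update_of_ne (by omega), Function.update_of_ne (by omega)]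
    exact hdown i j hpi hij hjN
  have hfn1 := hfeas (n + 1) (by omega) (by omega)
  have hfn0 := hfeas (n - 1) (by omega) (by omega)
  constructor
  · intro hz
    refine ⟨feas _ hfn1.1 hfn1.2, ?_, noninc _, loss_update _
      (mul_le_mul_of_nonpos_left hq1 (le_of_lt hz))⟩
    intro i j hi hij hjp
    by_cases hin : i = n
    · rw [hin, Function.update_self]
      by_cases hjn : j = n
      · rw [hjn, Function.update_self]
      · rw [Function.update_of_ne hjn]
        exact hup (n + 1) j (by omega) (by omega) hjp
    · rw [Function.update_of_ne hin]
      by_cases hjn : j = n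
      · rw [hjn, Function.update_self]
        exact hup i (n + 1) hi (by omega) (by omega)
      · rw [Function.update_of_ne hjn]
        exact hup i j hi hij hjp
  · intro hz
    refine ⟨feas _ hfn0.1 hfn0.2, ?_, noninc _, loss_update _
      (mul_le_mul_of_nonneg_left hq2 (le_of_lt hz))⟩
    intro i j hi hij hjp
    by_cases hin : i = n
    · rw [hin, Function.update_self]
      by_cases hjn : j = n
      · rw [hjn, Function.update_self]
      · rw [Function.update_of_ne hjn]
        exact hup (n - 1) j (by omega) (by omega) hjp
    · rw [Function.update_of_ne hin]
      by_cases hjn : j = n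
      · rw [hjn, Function.update_self]
        exact hup i (n - 1) hi (by omega) (by omega)
      · rw [Function.update_of_ne hjn]
        exact hup i j hi hij hjp
end

section
/- Let N ≥ 1, let z_1,…,z_N be real numbers, let Q_0 ≤ Q_1 be reals, and let q be a feasible unimodal sequence with peak index p (q nondecreasing on {1,…,p}, nonincreasing on {p,…,N}). Fix an index n with p < n < N. If z_n < 0, then the sequence q' obtained from q by setting q'_n = q_{n-1} (and q'_j = q_j for j ≠ n) is feasible, unimodal with the same peak p, and satisfies ∑_j z_j q'_j ≤ ∑_j z_j q_j. Likewise, if z_n > 0, then the sequence q'' obtained by setting q''_n = q_{n+1} is feasible, unimodal with peak p, and satisfies ∑_j z_j q''_j ≤ ∑_j z_j q_j. -/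
/-- for a feasible sequence, unimodal with peak `p`, and an index `n` with
`p < n < N`: if `z_n < 0`, replacing `q_n` by `q_{n-1}` keeps feasibility and unimodality
with the same peak and does not increase the linear loss; if `z_n > 0`, the same holds
for replacing `q_n` by `q_{n+1}`. -/
theorem stmt3 (N p n : ℕ) (z q : ℕ → ℝ) (Q0 Q1 : ℝ) (hQ : Q0 ≤ Q1)
    (hN : 1 ≤ N) (hp1 : 1 ≤ p)
    (hfeas : Feasible Q0 Q1 N q)
    (hup : NondecOn q 1 p) (hdown : NonincOn q p N)
    (hpn : p < n) (hnN : n < N) :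
    (z n < 0 →
      Feasible Q0 Q1 N (Function.update q n (q (n - 1))) ∧
      NondecOn (Function.update q n (q (n - 1))) 1 p ∧
      NonincOn (Function.update q n (q (n - 1))) p N ∧
      linLoss z (Function.update q n (q (n - 1))) N ≤ linLoss z q N) ∧
    (0 < z n →
      Feasible Q0 Q1 N (Function.update q n (q (n + 1))) ∧
      NondecOn (Function.update q n (q (n + 1))) 1 p ∧
      NonincOn (Function.update q n (q (n + 1))) p N ∧
      linLoss z (Function.update q n (q (n + 1))) N ≤ linLoss z q N) := by

  have hn1 : 1 ≤ n := le_trans hp1 hpn.le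
  have hnN' : n ≤ N := hnN.le
  have hnIcc : n ∈ Finset.Icc 1 N := Finset.mem_Icc.2 ⟨hn1, hnN'⟩
  have key : ∀ v, linLoss z (Function.update q n v) N
      = linLoss z q N + z n * (v - q n) := by
    intro v
    unfold linLoss
    rw [← Finset.add_sum_erase _ _ hnIcc, ← Finset.add_sum_erase _ (fun j => z j * q j) hnIcc]
    have hs : ∑ j ∈ (Finset.Icc 1 N).erase n, z j * Function.update q n v j
        = ∑ j ∈ (Finset.Icc 1 N).erase n, z j * q j := by
      refine Finset.sum_congr rfl fun j hj => ?_
      rw [Function.update_of_ne (Finset.ne_of_mem_erase hj)]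
    rw [hs, Function.update_self]
    ring
  have hupd : ∀ v j, j ≠ n → Function.update q n v j = q j :=
    fun v j hj => Function.update_of_ne hj v q
  -- monotonicity facts
  have hpn1 : p ≤ n - 1 := Nat.le_sub_one_of_lt hpn
  have hn1N : n - 1 ≤ N := le_trans (Nat.sub_le n 1) hnN'
  have h1n1 : 1 ≤ n - 1 := le_trans hp1 hpn1
  have hfeas' : ∀ v, 1 ≤ v → v ≤ N →
      Feasible Q0 Q1 N (Function.update q n (q v)) := by
    intro v hv1 hvN m hm1 hmN
    by_cases hmn : m = n
    · subst hmn; rw [Function.update_self]; exact hfeas v hv1 hvN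
    · rw [hupd _ m hmn]; exact hfeas m hm1 hmN
  have hup' : ∀ v, NondecOn (Function.update q n (q v)) 1 p := by
    intro v i j h1i hij hjp
    rw [hupd _ i (by omega), hupd _ j (by omega)]
    exact hup i j h1i hij hjp
  have hdown' : ∀ w, p ≤ w → w ≤ N → (∀ i, p ≤ i → i ≤ n → q w ≤ q i → True) →
      True := fun _ _ _ _ => trivial
  constructor
  · intro hz
    refine ⟨hfeas' (n-1) h1n1 hn1N, hup' _, ?_, ?_⟩
    · intro i j hpi hij hjN
      by_cases hin : i = n
      · by_cases hjn : j = n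
        · subst hin; subst hjn; exact le_refl _
        · rw [hin]
          rw [hupd _ j hjn, Function.update_self]
          exact hdown (n-1) j (by omega) (by omega) hjN
      · rw [hupd _ i hin]
        by_cases hjn : j = n
        · rw [hjn, Function.update_self]
          exact hdown i (n-1) hpi (by omega) (by omega)
        · rw [hupd _ j hjn]
          exact hdown i j hpi hij hjN
    · rw [key]
      have hq : q n ≤ q (n-1) := hdown (n-1) n hpn1 (Nat.sub_le n 1) hnN'
      nlinarith
  · intro hz
    refine ⟨hfeas' (n+1) (by omega) (by omega), hup' _, ?_, ?_⟩
    · intro i j hpi hij hjN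
      by_cases hin : i = n
      · by_cases hjn : j = n
        · subst hin; subst hjn; exact le_refl _
        · rw [hin]
          rw [hupd _ j hjn, Function.update_self]
          exact hdown (n+1) j (by omega) (by omega) hjN
      · rw [hupd _ i hin]
        by_cases hjn : j = n
        · rw [hjn, Function.update_self]
          exact hdown i (n+1) hpi (by omega) (by omega)
        · rw [hupd _ j hjn]
          exact hdown i j hpi hij hjN
    · rw [key]
      have hq : q (n+1) ≤ q n := hdown n (n+1) hpn.le (by omega) (by omega)
      nlinarith
end

section
/- Let N ≥ 1, let z_1,…,z_N be real numbers, let Q_0 ≤ Q_1 be reals, and let q be a feasible unimodal sequence with peak index p that is constant on a block {a,…,b} with 1 < a ≤ b < p (q_n = c for all a ≤ n ≤ b). If ∑_{n=a}^{b} z_n < 0, then the sequence q' obtained from q by setting q'_n = q_{b+1} for all a ≤ n ≤ b (and q'_j = q_j otherwise) is feasible, unimodal with the same peak p, and satisfies ∑_j z_j q'_j ≤ ∑_j z_j q_j. If instead ∑_{n=a}^{b} z_n > 0, the analogous replacement of the block value by q_{a-1} yields a feasible unimodal sequence with linear loss at most that of q. -/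
/-- Replace the values of `q` on the block `{a,…,b}` by the constant `v`. -/
def blockUpdate (q : ℕ → ℝ) (a b : ℕ) (v : ℝ) : ℕ → ℝ :=
  fun j => if a ≤ j ∧ j ≤ b then v else q j

lemma stmt4_aux (N p a b : ℕ) (z q : ℕ → ℝ) (Q0 Q1 c v : ℝ)
    (hpN : p ≤ N)
    (hfeas : Feasible Q0 Q1 N q)
    (hup : NondecOn q 1 p) (hdown : NonincOn q p N)
    (h1a : 1 < a) (hab : a ≤ b) (hbp : b < p)
    (hvQ0 : Q0 ≤ v) (hvQ1 : v ≤ Q1)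
    (hlo : ∀ i, 1 ≤ i → i < a → q i ≤ v)
    (hhi : ∀ j, b < j → j ≤ p → v ≤ q j)
    (hloss : (∑ n ∈ Finset.Icc a b, z n) * (v - c) ≤ 0)
    (hconst : ∀ n, a ≤ n → n ≤ b → q n = c) :
    Feasible Q0 Q1 N (blockUpdate q a b v) ∧
      NondecOn (blockUpdate q a b v) 1 p ∧
      NonincOn (blockUpdate q a b v) p N ∧
      linLoss z (blockUpdate q a b v) N ≤ linLoss z q N := by
  refine ⟨?_, ?_, ?_, ?_⟩
  · intro n h1 h2
    unfold blockUpdate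
    by_cases h : a ≤ n ∧ n ≤ b
    · rw [if_pos h]; exact ⟨hvQ0, hvQ1⟩
    · rw [if_neg h]; exact hfeas n h1 h2
  · intro i j h1i hij hjp
    unfold blockUpdate
    by_cases hi : a ≤ i ∧ i ≤ b <;> by_cases hj : a ≤ j ∧ j ≤ b
    · rw [if_pos hi, if_pos hj]
    · rw [if_pos hi, if_neg hj]
      have hjb : b < j := by
        rcases Nat.lt_or_ge b j with h | h
        · exact h
        · exact absurd ⟨le_trans hi.1 hij, h⟩ hj
      exact hhi j hjb hjp
    · rw [if_neg hi, if_pos hj]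
      have hia : i < a := by
        rcases Nat.lt_or_ge i a with h | h
        · exact h
        · exact absurd ⟨h, le_trans hij hj.2⟩ hi
      exact hlo i h1i hia
    · rw [if_neg hi, if_neg hj]
      exact hup i j h1i hij hjp
  · intro i j hpi hij hjN
    unfold blockUpdate
    rw [if_neg, if_neg]
    · exact hdown i j hpi hij hjN
    · rintro ⟨_, h⟩; exact absurd (lt_of_lt_of_le hbp hpi) (not_lt.mpr h)
    · rintro ⟨_, h⟩
      exact absurd (lt_of_lt_of_le hbp (le_trans hpi hij)) (not_lt.mpr h)
  · have hsub : Finset.Icc a b ⊆ Finset.Icc 1 N := by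
      intro x hx
      simp only [Finset.mem_Icc] at hx ⊢
      exact ⟨le_trans h1a.le hx.1, le_trans hx.2 (le_trans hbp.le hpN)⟩
    have key : linLoss z (blockUpdate q a b v) N - linLoss z q N
        = (∑ n ∈ Finset.Icc a b, z n) * (v - c) := by
      unfold linLoss
      rw [← Finset.sum_sub_distrib, Finset.sum_mul]
      rw [← Finset.sum_subset hsub]
      · apply Finset.sum_congr rfl
        intro x hx
        simp only [Finset.mem_Icc] at hx
        unfold blockUpdate
        rw [if_pos hx, hconst x hx.1 hx.2]
        ring
      · intro x _ hx
        simp only [Finset.mem_Icc] at hx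
        unfold blockUpdate
        rw [if_neg hx]
        ring
    linarith [key, hloss]

/-- for a feasible sequence, unimodal with peak `p`, constant equal to `c`
on a block `{a,…,b}` with `1 < a ≤ b < p`: if the block's cumulative loss is negative,
replacing the block value by `q_{b+1}` keeps feasibility and unimodality with the same
peak and does not increase the linear loss; if the block's cumulative loss is positive,
the same holds for replacing the block value by `q_{a-1}`. -/
theorem stmt4 (N p a b : ℕ) (z q : ℕ → ℝ) (Q0 Q1 c : ℝ) (hQ : Q0 ≤ Q1)
    (hN : 1 ≤ N) (hpN : p ≤ N)
    (hfeas : Feasible Q0 Q1 N q)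
    (hup : NondecOn q 1 p) (hdown : NonincOn q p N)
    (h1a : 1 < a) (hab : a ≤ b) (hbp : b < p)
    (hconst : ∀ n, a ≤ n → n ≤ b → q n = c) :
    ((∑ n ∈ Finset.Icc a b, z n) < 0 →
      Feasible Q0 Q1 N (blockUpdate q a b (q (b + 1))) ∧
      NondecOn (blockUpdate q a b (q (b + 1))) 1 p ∧
      NonincOn (blockUpdate q a b (q (b + 1))) p N ∧
      linLoss z (blockUpdate q a b (q (b + 1))) N ≤ linLoss z q N) ∧
    (0 < (∑ n ∈ Finset.Icc a b, z n) →
      Feasible Q0 Q1 N (blockUpdate q a b (q (a - 1))) ∧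
      NondecOn (blockUpdate q a b (q (a - 1))) 1 p ∧
      NonincOn (blockUpdate q a b (q (a - 1))) p N ∧
      linLoss z (blockUpdate q a b (q (a - 1))) N ≤ linLoss z q N) := by
  constructor
  · intro hS
    have hb1p : b + 1 ≤ p := hbp
    have hb1N : b + 1 ≤ N := le_trans hb1p hpN
    have hQb1 := hfeas (b + 1) (Nat.le_add_left 1 b) hb1N
    have hcv : c ≤ q (b + 1) := by
      rw [← hconst b hab le_rfl]
      exact hup b (b + 1) (le_trans h1a.le hab) (Nat.le_succ b) hb1p
    exact stmt4_aux N p a b z q Q0 Q1 c (q (b + 1)) hpN hfeas hup hdown h1a hab hbp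
      hQb1.1 hQb1.2
      (fun i h1 h2 => hup i (b + 1) h1 (le_trans (Nat.le_of_lt_succ (lt_of_lt_of_le h2 (Nat.le_succ_of_le hab))) (Nat.le_succ b)) hb1p)
      (fun j h1 h2 => hup (b + 1) j (le_trans (le_trans h1a.le hab) (Nat.le_succ b)) h1 h2)
      (mul_nonpos_of_nonpos_of_nonneg hS.le (by linarith))
      hconst
  · intro hS
    have ha1 : 1 ≤ a - 1 := Nat.le_sub_one_of_lt h1a
    have ha1a : a - 1 < a := Nat.sub_lt (by omega) one_pos
    have hQa1 := hfeas (a - 1) ha1 (by omega)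
    have hcv : q (a - 1) ≤ c := by
      rw [← hconst a le_rfl hab]
      exact hup (a - 1) a ha1 ha1a.le (by omega)
    exact stmt4_aux N p a b z q Q0 Q1 c (q (a - 1)) hpN hfeas hup hdown h1a hab hbp
      hQa1.1 hQa1.2
      (fun i h1 h2 => hup i (a - 1) h1 (by omega) (by omega))
      (fun j h1 h2 => hup (a - 1) j ha1 (by omega) h2)
      (mul_nonpos_of_nonneg_of_nonpos hS.le (by linarith))
      hconst
end

section
/- Let N ≥ 1, let z_1,…,z_N be real numbers, and let Q_0 ≤ Q_1 be reals. Define f(n) = min over 0 ≤ k ≤ n of [Q_0 ∑_{i=1}^{k} z_i + Q_1 ∑_{i=k+1}^{n} z_i] and g(n) = min over n ≤ m ≤ N of [Q_1 ∑_{i=n+1}^{m} z_i + Q_0 ∑_{i=m+1}^{N} z_i], for 0 ≤ n ≤ N. Then min over 0 ≤ τ_1 ≤ τ_2 ≤ N of the rectangular loss L_{τ_1,τ_2} equals min over 0 ≤ n ≤ N of [f(n) + g(n)]. -/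
/-- Rectangular loss `L_{τ1,τ2} = Q0 ∑_{n=1}^{τ1} z_n + Q1 ∑_{n=τ1+1}^{τ2} z_n
  + Q0 ∑_{n=τ2+1}^{N} z_n`. -/
noncomputable def rectLoss (z : ℕ → ℝ) (Q0 Q1 : ℝ) (N τ1 τ2 : ℕ) : ℝ :=
  Q0 * ∑ n ∈ Finset.Icc 1 τ1, z n + Q1 * ∑ n ∈ Finset.Icc (τ1 + 1) τ2, z n
    + Q0 * ∑ n ∈ Finset.Icc (τ2 + 1) N, z n

/-- `f n`: optimal nondecreasing step loss on the first `n` samples,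
`f(n) = min_{0 ≤ k ≤ n} [Q0 ∑_{i=1}^{k} z_i + Q1 ∑_{i=k+1}^{n} z_i]`. -/
noncomputable def fOpt (z : ℕ → ℝ) (Q0 Q1 : ℝ) (n : ℕ) : ℝ :=
  (Finset.range (n + 1)).inf' Finset.nonempty_range_add_one
    (fun k => Q0 * ∑ i ∈ Finset.Icc 1 k, z i + Q1 * ∑ i ∈ Finset.Icc (k + 1) n, z i)

/-- `g n`: optimal nonincreasing step loss on the last `N - n` samples,
`g(n) = min_{n ≤ m ≤ N} [Q1 ∑_{i=n+1}^{m} z_i + Q0 ∑_{i=m+1}^{N} z_i]`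
(the threshold `m = n + j` is parametrized by `j ∈ {0,…,N-n}`). -/
noncomputable def gOpt (z : ℕ → ℝ) (Q0 Q1 : ℝ) (N n : ℕ) : ℝ :=
  (Finset.range (N - n + 1)).inf' Finset.nonempty_range_add_one
    (fun j => Q1 * ∑ i ∈ Finset.Icc (n + 1) (n + j), z i
      + Q0 * ∑ i ∈ Finset.Icc (n + j + 1) N, z i)

lemma sum_Icc_split (z : ℕ → ℝ) (a b c : ℕ) (hab : a ≤ b) (hbc : b ≤ c) :
    ∑ i ∈ Finset.Icc (a + 1) b, z i + ∑ i ∈ Finset.Icc (b + 1) c, z i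
      = ∑ i ∈ Finset.Icc (a + 1) c, z i := by
  rw [Finset.Icc_add_one_left_eq_Ioc, Finset.Icc_add_one_left_eq_Ioc, Finset.Icc_add_one_left_eq_Ioc]
  exact Finset.sum_Ioc_consecutive _ hab hbc

/-- the minimum of the rectangular losses over `0 ≤ τ1 ≤ τ2 ≤ N` equals
the minimum over `0 ≤ n ≤ N` of `f(n) + g(n)`; both minima are attained and coincide. -/
theorem stmt8 (N : ℕ) (hN : 1 ≤ N) (z : ℕ → ℝ) (Q0 Q1 : ℝ) (hQ : Q0 ≤ Q1) :
    ∃ m : ℝ,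
      IsLeast {L : ℝ | ∃ τ1 τ2 : ℕ, τ1 ≤ τ2 ∧ τ2 ≤ N ∧
        L = rectLoss z Q0 Q1 N τ1 τ2} m ∧
      IsLeast {L : ℝ | ∃ n : ℕ, n ≤ N ∧
        L = fOpt z Q0 Q1 n + gOpt z Q0 Q1 N n} m := by
  classical
  set T : Finset (ℕ × ℕ) :=
    (Finset.range (N + 1) ×ˢ Finset.range (N + 1)).filter (fun p => p.1 ≤ p.2) with hT
  have hTne : T.Nonempty := ⟨(0, 0), by simp [hT]⟩
  set F : ℕ × ℕ → ℝ := fun p => rectLoss z Q0 Q1 N p.1 p.2 with hF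
  set m : ℝ := T.inf' hTne F with hm
  have hmemT : ∀ τ1 τ2 : ℕ, τ1 ≤ τ2 → τ2 ≤ N → (τ1, τ2) ∈ T := by
    intro τ1 τ2 h1 h2
    simp [hT, Nat.lt_succ_of_le, h1, h2, Nat.lt_succ_of_le (h1.trans h2)]
  have hlb : ∀ τ1 τ2 : ℕ, τ1 ≤ τ2 → τ2 ≤ N → m ≤ rectLoss z Q0 Q1 N τ1 τ2 := by
    intro τ1 τ2 h1 h2
    exact Finset.inf'_le F (hmemT τ1 τ2 h1 h2)
  -- attainment of m
  obtain ⟨p, hpT, hpm⟩ := Finset.exists_mem_eq_inf' hTne F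
  simp only [hT, Finset.mem_filter, Finset.mem_product, Finset.mem_range] at hpT
  obtain ⟨⟨hp1, hp2⟩, hple⟩ := hpT
  refine ⟨m, ⟨⟨p.1, p.2, hple, Nat.lt_succ_iff.mp hp2, hpm⟩, ?_⟩, ⟨?_, ?_⟩⟩
  · rintro L ⟨τ1, τ2, h1, h2, rfl⟩
    exact hlb τ1 τ2 h1 h2
  · -- m is in the second set, witness n = p.1
    have hp2N : p.2 ≤ N := Nat.lt_succ_iff.mp hp2
    have hp1N : p.1 ≤ N := hple.trans hp2N
    refine ⟨p.1, hp1N, le_antisymm ?_ ?_⟩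
    · -- m ≤ f(p.1) + g(p.1): both infs attained, combine into a rectLoss
      obtain ⟨k, hk, hkeq⟩ := Finset.exists_mem_eq_inf' (Finset.nonempty_range_add_one (n := p.1))
        (fun k => Q0 * ∑ i ∈ Finset.Icc 1 k, z i + Q1 * ∑ i ∈ Finset.Icc (k + 1) p.1, z i)
      obtain ⟨j, hj, hjeq⟩ := Finset.exists_mem_eq_inf'
        (Finset.nonempty_range_add_one (n := N - p.1))
        (fun j => Q1 * ∑ i ∈ Finset.Icc (p.1 + 1) (p.1 + j), z i
          + Q0 * ∑ i ∈ Finset.Icc (p.1 + j + 1) N, z i)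
      rw [Finset.mem_range, Nat.lt_succ_iff] at hk hj
      have hkn : k ≤ p.1 := hk
      have hnj : p.1 + j ≤ N := by omega
      have key : fOpt z Q0 Q1 p.1 + gOpt z Q0 Q1 N p.1
          = rectLoss z Q0 Q1 N k (p.1 + j) := by
        rw [fOpt, gOpt, hkeq, hjeq, rectLoss,
          ← sum_Icc_split z k p.1 (p.1 + j) hkn (Nat.le_add_right _ _)]
        ring
      rw [key]
      exact hlb k (p.1 + j) (hkn.trans (Nat.le_add_right _ _)) hnj
    · -- f(p.1) + g(p.1) ≤ m: pick k = p.1 and j = p.2 - p.1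
      have hf : fOpt z Q0 Q1 p.1 ≤ Q0 * ∑ i ∈ Finset.Icc 1 p.1, z i := by
        have := Finset.inf'_le (b := p.1)
          (fun k => Q0 * ∑ i ∈ Finset.Icc 1 k, z i + Q1 * ∑ i ∈ Finset.Icc (k + 1) p.1, z i)
          (Finset.self_mem_range_succ p.1)
        simp only [Finset.Icc_eq_empty_of_lt (Nat.lt_succ_self p.1), Finset.sum_empty,
          mul_zero, add_zero] at this
        exact this
      have hg : gOpt z Q0 Q1 N p.1 ≤ Q1 * ∑ i ∈ Finset.Icc (p.1 + 1) p.2, z i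
          + Q0 * ∑ i ∈ Finset.Icc (p.2 + 1) N, z i := by
        have hjmem : p.2 - p.1 ∈ Finset.range (N - p.1 + 1) := by
          rw [Finset.mem_range]; omega
        have := Finset.inf'_le
          (fun j => Q1 * ∑ i ∈ Finset.Icc (p.1 + 1) (p.1 + j), z i
            + Q0 * ∑ i ∈ Finset.Icc (p.1 + j + 1) N, z i) hjmem
        have h12 : p.1 + (p.2 - p.1) = p.2 := by omega
        rw [h12] at this
        exact this
      calc fOpt z Q0 Q1 p.1 + gOpt z Q0 Q1 N p.1
          ≤ rectLoss z Q0 Q1 N p.1 p.2 := by rw [rectLoss]; linarith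
        _ = m := hpm.symm
  · rintro L ⟨n, hn, rfl⟩
    obtain ⟨k, hk, hkeq⟩ := Finset.exists_mem_eq_inf' (Finset.nonempty_range_add_one (n := n))
      (fun k => Q0 * ∑ i ∈ Finset.Icc 1 k, z i + Q1 * ∑ i ∈ Finset.Icc (k + 1) n, z i)
    obtain ⟨j, hj, hjeq⟩ := Finset.exists_mem_eq_inf'
      (Finset.nonempty_range_add_one (n := N - n))
      (fun j => Q1 * ∑ i ∈ Finset.Icc (n + 1) (n + j), z i
        + Q0 * ∑ i ∈ Finset.Icc (n + j + 1) N, z i)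
    rw [Finset.mem_range, Nat.lt_succ_iff] at hk hj
    have hnj : n + j ≤ N := by omega
    have key : fOpt z Q0 Q1 n + gOpt z Q0 Q1 N n = rectLoss z Q0 Q1 N k (n + j) := by
      rw [fOpt, gOpt, hkeq, hjeq, rectLoss,
        ← sum_Icc_split z k n (n + j) hk (Nat.le_add_right _ _)]
      ring
    rw [key]
    exact hlb k (n + j) (hk.trans (Nat.le_add_right _ _)) hnj
end

section
/- Let Q_0 ≤ Q_1 be reals, and let z⁰ = (z⁰_1,…,z⁰_{N_0}) and z¹ = (z¹_1,…,z¹_{N_1}) be two finite real sequences with N_0, N_1 ≥ 1. For a finite sequence w of length M, define R(w) = min over 0 ≤ k ≤ m ≤ M of [Q_0 ∑_{i=1}^{k} w_i + Q_1 ∑_{i=k+1}^{m} w_i + Q_0 ∑_{i=m+1}^{M} w_i], U(w) = min over 0 ≤ k ≤ M of [Q_0 ∑_{i=1}^{k} w_i + Q_1 ∑_{i=k+1}^{M} w_i], D(w) = min over 0 ≤ k ≤ M of [Q_1 ∑_{i=1}^{k} w_i + Q_0 ∑_{i=k+1}^{M} w_i], and S(w) = ∑_{i=1}^{M} w_i.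 Then for the concatenation z⁰ ++ z¹: R(z⁰ ++ z¹) = min( R(z⁰) + Q_0 S(z¹) , Q_0 S(z⁰) + R(z¹) , U(z⁰) + D(z¹) ). -/
/-- Total sum `S(w) = ∑_{i=1}^{M} w_i`. -/
noncomputable def Sw (w : ℕ → ℝ) (M : ℕ) : ℝ := ∑ i ∈ Finset.Icc 1 M, w i

/-- Optimal rectangular loss
`R(w) = min_{0 ≤ k ≤ m ≤ M} [Q0 ∑_{i=1}^{k} w_i + Q1 ∑_{i=k+1}^{m} w_i + Q0 ∑_{i=m+1}^{M} w_i]`. -/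
noncomputable def Rw (Q0 Q1 : ℝ) (w : ℕ → ℝ) (M : ℕ) : ℝ :=
  (Finset.range (M + 1)).inf' Finset.nonempty_range_add_one (fun m =>
    (Finset.range (m + 1)).inf' Finset.nonempty_range_add_one (fun k =>
      Q0 * ∑ i ∈ Finset.Icc 1 k, w i + Q1 * ∑ i ∈ Finset.Icc (k + 1) m, w i
        + Q0 * ∑ i ∈ Finset.Icc (m + 1) M, w i))

/-- Optimal nondecreasing step loss
`U(w) = min_{0 ≤ k ≤ M} [Q0 ∑_{i=1}^{k} w_i + Q1 ∑_{i=k+1}^{M} w_i]`. -/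
noncomputable def Uw (Q0 Q1 : ℝ) (w : ℕ → ℝ) (M : ℕ) : ℝ :=
  (Finset.range (M + 1)).inf' Finset.nonempty_range_add_one (fun k =>
    Q0 * ∑ i ∈ Finset.Icc 1 k, w i + Q1 * ∑ i ∈ Finset.Icc (k + 1) M, w i)

/-- Optimal nonincreasing step loss
`D(w) = min_{0 ≤ k ≤ M} [Q1 ∑_{i=1}^{k} w_i + Q0 ∑_{i=k+1}^{M} w_i]`. -/
noncomputable def Dw (Q0 Q1 : ℝ) (w : ℕ → ℝ) (M : ℕ) : ℝ :=
  (Finset.range (M + 1)).inf' Finset.nonempty_range_add_one (fun k =>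
    Q1 * ∑ i ∈ Finset.Icc 1 k, w i + Q0 * ∑ i ∈ Finset.Icc (k + 1) M, w i)

/-- Concatenation of a length-`N0` sequence `z0` (indices `1,…,N0`) with a sequence `z1`
(indices `1,…,N1`), giving indices `1,…,N0+N1`. -/
def concatSeq (z0 : ℕ → ℝ) (N0 : ℕ) (z1 : ℕ → ℝ) : ℕ → ℝ :=
  fun i => if i ≤ N0 then z0 i else z1 (i - N0)

lemma icc1 (b : ℕ) : Finset.Icc 1 b = Finset.Ioc 0 b := Finset.Icc_add_one_left_eq_Ioc 0 b
lemma iccs (a b : ℕ) : Finset.Icc (a+1) b = Finset.Ioc a b := Finset.Icc_add_one_left_eq_Ioc a b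

lemma sum_lo (z0 : ℕ → ℝ) (N0 : ℕ) (z1 : ℕ → ℝ) {a b : ℕ} (hb : b ≤ N0) :
    ∑ i ∈ Finset.Ioc a b, concatSeq z0 N0 z1 i = ∑ i ∈ Finset.Ioc a b, z0 i := by
  apply Finset.sum_congr rfl
  intro i hi
  simp only [Finset.mem_Ioc] at hi
  exact if_pos (by omega)

lemma sum_hi (z0 : ℕ → ℝ) (N0 : ℕ) (z1 : ℕ → ℝ) {a b : ℕ} (ha : N0 ≤ a) :
    ∑ i ∈ Finset.Ioc a b, concatSeq z0 N0 z1 i = ∑ i ∈ Finset.Ioc (a - N0) (b - N0), z1 i := by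
  rcases le_or_gt b a with h | h
  · rw [Finset.Ioc_eq_empty (by omega), Finset.Ioc_eq_empty (by omega)]
    simp
  · have hb : N0 ≤ b := le_of_lt (lt_of_le_of_lt ha h)
    have hmap : Finset.Ioc a b = Finset.map (addLeftEmbedding N0) (Finset.Ioc (a - N0) (b - N0)) := by
      rw [Finset.map_add_left_Ioc]
      congr 1 <;> omega
    rw [hmap, Finset.sum_map]
    apply Finset.sum_congr rfl
    intro j hj
    simp only [Finset.mem_Ioc] at hj
    simp only [addLeftEmbedding_apply, concatSeq]
    rw [if_neg (by omega)]
    congr 1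
    omega

lemma sum_split (z0 : ℕ → ℝ) (N0 : ℕ) (z1 : ℕ → ℝ) {a b : ℕ} (ha : a ≤ N0) (hb : N0 ≤ b) :
    ∑ i ∈ Finset.Ioc a b, concatSeq z0 N0 z1 i
      = ∑ i ∈ Finset.Ioc a N0, z0 i + ∑ i ∈ Finset.Ioc 0 (b - N0), z1 i := by
  rw [← Finset.sum_Ioc_consecutive _ ha hb, sum_lo _ _ _ le_rfl, sum_hi _ _ _ le_rfl, Nat.sub_self]

/-- the optimal rectangular loss of a concatenation satisfies
`R(z⁰ ++ z¹) = min( R(z⁰) + Q0 S(z¹), Q0 S(z⁰) + R(z¹), U(z⁰) + D(z¹) )`. -/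
theorem stmt9 (Q0 Q1 : ℝ) (hQ : Q0 ≤ Q1) (N0 N1 : ℕ) (h0 : 1 ≤ N0) (h1 : 1 ≤ N1)
    (z0 z1 : ℕ → ℝ) :
    Rw Q0 Q1 (concatSeq z0 N0 z1) (N0 + N1) =
      min (min (Rw Q0 Q1 z0 N0 + Q0 * Sw z1 N1) (Q0 * Sw z0 N0 + Rw Q0 Q1 z1 N1))
        (Uw Q0 Q1 z0 N0 + Dw Q0 Q1 z1 N1) := by
  set w := concatSeq z0 N0 z1 with hw
  -- value of the big objective at (k, m)
  have hval : ∀ m k, (Q0 * ∑ i ∈ Finset.Icc 1 k, w i + Q1 * ∑ i ∈ Finset.Icc (k + 1) m, w i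
      + Q0 * ∑ i ∈ Finset.Icc (m + 1) (N0 + N1), w i)
      = Q0 * ∑ i ∈ Finset.Ioc 0 k, w i + Q1 * ∑ i ∈ Finset.Ioc k m, w i
      + Q0 * ∑ i ∈ Finset.Ioc m (N0 + N1), w i := by
    intro m k; rw [icc1, iccs, iccs]
  have hM : N0 + N1 - N0 = N1 := by omega
  apply le_antisymm
  · refine le_min (le_min ?_ ?_) ?_
    · -- Rw w ≤ Rw z0 + Q0 * Sw z1
      obtain ⟨m, hm, hmeq⟩ := Finset.exists_mem_eq_inf' (Finset.nonempty_range_add_one (n := N0))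
        (fun m => (Finset.range (m + 1)).inf' Finset.nonempty_range_add_one (fun k =>
          Q0 * ∑ i ∈ Finset.Icc 1 k, z0 i + Q1 * ∑ i ∈ Finset.Icc (k + 1) m, z0 i
            + Q0 * ∑ i ∈ Finset.Icc (m + 1) N0, z0 i))
      obtain ⟨k, hk, hkeq⟩ := Finset.exists_mem_eq_inf' (Finset.nonempty_range_add_one (n := m))
        (fun k => Q0 * ∑ i ∈ Finset.Icc 1 k, z0 i + Q1 * ∑ i ∈ Finset.Icc (k + 1) m, z0 i
            + Q0 * ∑ i ∈ Finset.Icc (m + 1) N0, z0 i)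
      simp only [Finset.mem_range] at hm hk
      have h1' : Rw Q0 Q1 w (N0 + N1) ≤ Q0 * ∑ i ∈ Finset.Icc 1 k, w i
          + Q1 * ∑ i ∈ Finset.Icc (k + 1) m, w i + Q0 * ∑ i ∈ Finset.Icc (m + 1) (N0 + N1), w i :=
        le_trans (Finset.inf'_le _ (Finset.mem_range.mpr (by omega)))
          (Finset.inf'_le (b := k) _ (Finset.mem_range.mpr (by omega)))
      refine h1'.trans (le_of_eq ?_)
      rw [hval, Rw, hmeq, hkeq]
      simp only [Sw, icc1, iccs]
      rw [sum_lo z0 N0 z1 (by omega), sum_lo z0 N0 z1 (by omega),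
        sum_split z0 N0 z1 (by omega) (by omega), hM]
      ring
    · -- Rw w ≤ Q0 * Sw z0 + Rw z1
      obtain ⟨m, hm, hmeq⟩ := Finset.exists_mem_eq_inf' (Finset.nonempty_range_add_one (n := N1))
        (fun m => (Finset.range (m + 1)).inf' Finset.nonempty_range_add_one (fun k =>
          Q0 * ∑ i ∈ Finset.Icc 1 k, z1 i + Q1 * ∑ i ∈ Finset.Icc (k + 1) m, z1 i
            + Q0 * ∑ i ∈ Finset.Icc (m + 1) N1, z1 i))
      obtain ⟨k, hk, hkeq⟩ := Finset.exists_mem_eq_inf' (Finset.nonempty_range_add_one (n := m))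
        (fun k => Q0 * ∑ i ∈ Finset.Icc 1 k, z1 i + Q1 * ∑ i ∈ Finset.Icc (k + 1) m, z1 i
            + Q0 * ∑ i ∈ Finset.Icc (m + 1) N1, z1 i)
      simp only [Finset.mem_range] at hm hk
      have h1' : Rw Q0 Q1 w (N0 + N1) ≤ Q0 * ∑ i ∈ Finset.Icc 1 (N0 + k), w i
          + Q1 * ∑ i ∈ Finset.Icc ((N0 + k) + 1) (N0 + m), w i
          + Q0 * ∑ i ∈ Finset.Icc ((N0 + m) + 1) (N0 + N1), w i :=
        le_trans (Finset.inf'_le _ (Finset.mem_range.mpr (by omega)))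
          (Finset.inf'_le (b := N0 + k) _ (Finset.mem_range.mpr (by omega)))
      refine h1'.trans (le_of_eq ?_)
      have e1 : N0 + k - N0 = k := by omega
      have e2 : N0 + m - N0 = m := by omega
      rw [Rw, hmeq, hkeq]
      simp only [Sw, icc1, iccs]
      rw [sum_split z0 N0 z1 (by omega) (by omega),
        sum_hi z0 N0 z1 (by omega), sum_hi z0 N0 z1 (by omega), hM, e1, e2]
      ring
    · -- Rw w ≤ Uw z0 + Dw z1
      obtain ⟨k, hk, hkeq⟩ := Finset.exists_mem_eq_inf' (Finset.nonempty_range_add_one (n := N0))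
        (fun k => Q0 * ∑ i ∈ Finset.Icc 1 k, z0 i + Q1 * ∑ i ∈ Finset.Icc (k + 1) N0, z0 i)
      obtain ⟨j, hj, hjeq⟩ := Finset.exists_mem_eq_inf' (Finset.nonempty_range_add_one (n := N1))
        (fun j => Q1 * ∑ i ∈ Finset.Icc 1 j, z1 i + Q0 * ∑ i ∈ Finset.Icc (j + 1) N1, z1 i)
      simp only [Finset.mem_range] at hk hj
      have h1' : Rw Q0 Q1 w (N0 + N1) ≤ Q0 * ∑ i ∈ Finset.Icc 1 k, w i
          + Q1 * ∑ i ∈ Finset.Icc (k + 1) (N0 + j), w i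
          + Q0 * ∑ i ∈ Finset.Icc ((N0 + j) + 1) (N0 + N1), w i :=
        le_trans (Finset.inf'_le _ (Finset.mem_range.mpr (by omega)))
          (Finset.inf'_le (b := k) _ (Finset.mem_range.mpr (by omega)))
      refine h1'.trans (le_of_eq ?_)
      have e2 : N0 + j - N0 = j := by omega
      rw [Uw, Dw, hkeq, hjeq]
      simp only [icc1, iccs]
      rw [sum_lo z0 N0 z1 (by omega),
        sum_split z0 N0 z1 (by omega) (by omega),
        sum_hi z0 N0 z1 (by omega), hM, e2]
      ring
  · -- min ≤ Rw w
    rw [Rw]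
    refine Finset.le_inf' _ _ ?_
    intro m hm
    refine Finset.le_inf' _ _ ?_
    intro k hk
    simp only [Finset.mem_range] at hm hk
    rw [hval]
    rcases le_total k N0 with hkN | hkN
    · rcases le_total m N0 with hmN | hmN
      · -- case m ≤ N0
        refine le_trans (le_trans (min_le_left _ _) (min_le_left _ _)) ?_
        have hle : Rw Q0 Q1 z0 N0 ≤ Q0 * ∑ i ∈ Finset.Icc 1 k, z0 i
            + Q1 * ∑ i ∈ Finset.Icc (k + 1) m, z0 i + Q0 * ∑ i ∈ Finset.Icc (m + 1) N0, z0 i :=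
          le_trans (Finset.inf'_le _ (Finset.mem_range.mpr (by omega)))
            (Finset.inf'_le (b := k) _ (Finset.mem_range.mpr (by omega)))
        refine le_trans (add_le_add_left hle _) (le_of_eq ?_)
        simp only [Sw, icc1, iccs]
        rw [sum_lo z0 N0 z1 (by omega), sum_lo z0 N0 z1 (by omega),
          sum_split z0 N0 z1 (by omega) (by omega), hM]
        ring
      · -- case k ≤ N0 ≤ m
        refine le_trans (min_le_right _ _) ?_
        have hle1 : Uw Q0 Q1 z0 N0 ≤ Q0 * ∑ i ∈ Finset.Icc 1 k, z0 i
            + Q1 * ∑ i ∈ Finset.Icc (k + 1) N0, z0 i :=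
          Finset.inf'_le _ (Finset.mem_range.mpr (by omega))
        have hle2 : Dw Q0 Q1 z1 N1 ≤ Q1 * ∑ i ∈ Finset.Icc 1 (m - N0), z1 i
            + Q0 * ∑ i ∈ Finset.Icc ((m - N0) + 1) N1, z1 i :=
          Finset.inf'_le _ (Finset.mem_range.mpr (by omega))
        refine le_trans (add_le_add hle1 hle2) (le_of_eq ?_)
        simp only [icc1, iccs]
        rw [sum_lo z0 N0 z1 (by omega),
          sum_split z0 N0 z1 (by omega) (by omega),
          sum_hi z0 N0 z1 (by omega), hM]
        ring
    · -- case N0 ≤ k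
      refine le_trans (le_trans (min_le_left _ _) (min_le_right _ _)) ?_
      have hle : Rw Q0 Q1 z1 N1 ≤ Q0 * ∑ i ∈ Finset.Icc 1 (k - N0), z1 i
          + Q1 * ∑ i ∈ Finset.Icc ((k - N0) + 1) (m - N0), z1 i
          + Q0 * ∑ i ∈ Finset.Icc ((m - N0) + 1) N1, z1 i :=
        le_trans (Finset.inf'_le _ (Finset.mem_range.mpr (by omega)))
          (Finset.inf'_le (b := k - N0) _ (Finset.mem_range.mpr (by omega)))
      refine le_trans (add_le_add_right hle _) (le_of_eq ?_)
      simp only [Sw, icc1, iccs]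
      rw [sum_split z0 N0 z1 (by omega) (by omega),
        sum_hi z0 N0 z1 (by omega), sum_hi z0 N0 z1 (by omega), hM]
      ring
end
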